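/- Let G = A * B be a free product of nontrivial groups with a fixed element a ∈ A of order at least 3. For each k ∈ ℕ let d_k(g) be the number of a-segments of length 2k+1 in the reduced word g, and d*_k(g) the number of a⁻¹-segments of length 2k+1. Then for every reduced word g ∈ G, d_k(g) = d*_k(g⁻¹), and consequently t_k(g) + t_k(g⁻¹) = 0 where t_k = d_k − d*_k. -/

import Mathlib

open Monoid Monoid.CoprodI

attribute [local instance] Classical.propDecidable

/-- The list of syllables of the reduced word representing `g`. -/
noncomputable def syllables {ι : Type*} {M : ι → Type*} [∀ i, Group (M i)]
    (g : CoprodI M) : List (Σ i, M i) :=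
  letI := Classical.decEq ι
  letI : ∀ i, DecidableEq (M i) := fun _ => Classical.decEq _
  (Word.equiv g).toList

/-- `g` is a palindrome iff its reduced word reads the same backwards. -/
noncomputable def IsPalindrome {ι : Type*} {M : ι → Type*} [∀ i, Group (M i)]
    (g : CoprodI M) : Prop :=
  (syllables g).reverse = syllables g

/-- `segCount s k g` is the number of `s`-segments of syllable length `2k+1`
in the reduced form of `g`: pairs of consecutive occurrences of the syllable `s`
at distance `2k+2` in the syllable list. -/
noncomputable def segCount {ι : Type*} {M : ι → Type*} [∀ i, Group (M i)]
    (s : Σ i, M i) (k : ℕ) (g : CoprodI M) : ℕ :=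
  ((Finset.range (syllables g).length ×ˢ Finset.range (syllables g).length).filter
    (fun pq => pq.1 < pq.2 ∧ (syllables g)[pq.1]? = some s ∧ (syllables g)[pq.2]? = some s ∧
      (∀ r ∈ Finset.Ioo pq.1 pq.2, (syllables g)[r]? ≠ some s) ∧ pq.2 - pq.1 = 2*k+2)).card

section Aux

variable {ι : Type*} {M : ι → Type*} [∀ i, Group (M i)]

/-- The formal inverse of a reduced word: reverse the list and invert each syllable. -/
def wordInvAux (w : Word M) : Word M where
  toList := (w.toList.map (fun l => ⟨l.1, l.2⁻¹⟩)).reverse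
  ne_one := by
    intro l hl
    rw [List.mem_reverse, List.mem_map] at hl
    obtain ⟨l', hl', rfl⟩ := hl
    simpa using w.ne_one l' hl'
  chain_ne := by
    rw [List.isChain_reverse]
    refine (List.isChain_map _).2 ?_
    exact w.chain_ne.imp (fun _ _ h => Ne.symm h)

theorem wordInvAux_prod (w : Word M) : (wordInvAux w).prod = w.prod⁻¹ := by
  rw [Word.prod, Word.prod, wordInvAux, List.prod_inv_reverse]
  simp [List.map_reverse, Function.comp_def]

theorem syllables_inv (g : CoprodI M) :
    syllables g⁻¹ = ((syllables g).map (fun l => ⟨l.1, l.2⁻¹⟩)).reverse := by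
  letI := Classical.decEq ι
  letI : ∀ i, DecidableEq (M i) := fun _ => Classical.decEq _
  show (Word.equiv g⁻¹).toList = ((Word.equiv g).toList.map (fun l => ⟨l.1, l.2⁻¹⟩)).reverse
  have h : (Word.equiv g⁻¹ : Word M) = wordInvAux (Word.equiv g) := by
    rw [Equiv.apply_eq_iff_eq_symm_apply]
    show g⁻¹ = (wordInvAux (Word.equiv g)).prod
    rw [wordInvAux_prod]
    have : ((Word.equiv g : Word M)).prod = g := Word.equiv.symm_apply_apply g
    rw [this]
  rw [h]
  rfl

/-- The abstract segment count of a list. -/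
noncomputable def segCardL {α : Type*} (L : List α) (s : α) (k : ℕ) : ℕ :=
  ((Finset.range L.length ×ˢ Finset.range L.length).filter
    (fun pq => pq.1 < pq.2 ∧ L[pq.1]? = some s ∧ L[pq.2]? = some s ∧
      (∀ r ∈ Finset.Ioo pq.1 pq.2, L[r]? ≠ some s) ∧ pq.2 - pq.1 = 2*k+2)).card

theorem segCount_eq_segCardL (s : Σ i, M i) (k : ℕ) (g : CoprodI M) :
    segCount s k g = segCardL (syllables g) s k := by
  unfold segCount segCardL
  congr

theorem segCardL_map {α β : Type*} (f : α → β) (hf : Function.Injective f)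
    (L : List α) (s : α) (k : ℕ) :
    segCardL (L.map f) (f s) k = segCardL L s k := by
  unfold segCardL
  rw [List.length_map]
  congr 1
  apply Finset.filter_congr
  intro pq _
  have key : ∀ r : ℕ, (L.map f)[r]? = some (f s) ↔ L[r]? = some s := by
    intro r
    rw [List.getElem?_map]
    constructor
    · intro h
      obtain ⟨x, hx, hfx⟩ := Option.map_eq_some_iff.mp h
      rw [hx, hf hfx]
    · intro h
      rw [h]; rfl
  rw [key, key]
  constructor
  · rintro ⟨h1, h2, h3, h4, h5⟩
    exact ⟨h1, h2, h3, fun r hr hc => h4 r hr (by rw [key]; exact hc), h5⟩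
  · rintro ⟨h1, h2, h3, h4, h5⟩
    exact ⟨h1, h2, h3, fun r hr hc => h4 r hr ((key r).mp hc), h5⟩

theorem segCardL_le_reverse {α : Type*} (L : List α) (s : α) (k : ℕ) :
    segCardL L s k ≤ segCardL L.reverse s k := by
  set n := L.length with hn
  apply Finset.card_le_card_of_injOn (fun pq => (n - 1 - pq.2, n - 1 - pq.1))
  · intro pq hpq
    simp only [Finset.mem_coe, Finset.mem_filter, Finset.mem_product, Finset.mem_range] at hpq ⊢
    obtain ⟨⟨hp, hq⟩, hlt, h1, h2, hmid, hd⟩ := hpq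
    rw [List.length_reverse]
    refine ⟨⟨by omega, by omega⟩, by omega, ?_, ?_, ?_, by omega⟩
    · rw [List.getElem?_reverse (by rw [← hn]; omega)]
      have : n - 1 - (n - 1 - pq.2) = pq.2 := by omega
      rw [← hn, this]; exact h2
    · rw [List.getElem?_reverse (by rw [← hn]; omega)]
      have : n - 1 - (n - 1 - pq.1) = pq.1 := by omega
      rw [← hn, this]; exact h1
    · intro r hr
      rw [Finset.mem_Ioo] at hr
      rw [List.getElem?_reverse (by rw [← hn]; omega)]
      rw [← hn]
      exact hmid (n - 1 - r) (Finset.mem_Ioo.mpr (by omega))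
  · intro pq hpq pq' hpq' heq
    simp only [Finset.mem_coe, Finset.mem_filter, Finset.mem_product, Finset.mem_range] at hpq hpq'
    obtain ⟨⟨hp, hq⟩, hlt, _⟩ := hpq
    obtain ⟨⟨hp', hq'⟩, hlt', _⟩ := hpq'
    rw [Prod.mk.injEq] at heq
    exact Prod.ext (by omega) (by omega)

theorem segCardL_reverse {α : Type*} (L : List α) (s : α) (k : ℕ) :
    segCardL L.reverse s k = segCardL L s k := by
  refine le_antisymm ?_ (segCardL_le_reverse L s k)
  have := segCardL_le_reverse L.reverse s k
  rwa [List.reverse_reverse] at this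

theorem segCount_inv (s : Σ i, M i) (k : ℕ) (g : CoprodI M) :
    segCount s k g = segCount ⟨s.1, s.2⁻¹⟩ k g⁻¹ := by
  have hf : Function.Injective (fun l : Σ i, M i => (⟨l.1, l.2⁻¹⟩ : Σ i, M i)) := by
    rintro ⟨i, m⟩ ⟨j, m'⟩ h
    obtain ⟨rfl, h2⟩ := Sigma.mk.inj_iff.mp h
    have := eq_of_heq h2
    rw [Sigma.mk.inj_iff]
    exact ⟨rfl, heq_of_eq (inv_injective this)⟩
  rw [segCount_eq_segCardL, segCount_eq_segCardL, syllables_inv, segCardL_reverse]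
  have : (⟨s.1, s.2⁻¹⟩ : Σ i, M i) = (fun l : Σ i, M i => (⟨l.1, l.2⁻¹⟩ : Σ i, M i)) s := rfl
  rw [this, segCardL_map _ hf]

end Aux

/-- `d_k(g) = d*_k(g⁻¹)` and `t_k(g) + t_k(g⁻¹) = 0` where `d_k` counts
`a`-segments of length `2k+1`, `d*_k` counts `a⁻¹`-segments of length `2k+1`
and `t_k = d_k - d*_k`. -/
theorem d_inv_and_t_inv {M : Bool → Type*} [∀ b, Group (M b)]
    [Nontrivial (M true)] [Nontrivial (M false)]
    (a : M true) (ha1 : a ≠ 1) (ha2 : a ≠ a⁻¹) (g : CoprodI M) (k : ℕ) :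
    segCount ⟨true, a⟩ k g = segCount ⟨true, a⁻¹⟩ k g⁻¹ ∧
    ((segCount ⟨true, a⟩ k g : ℤ) - segCount ⟨true, a⁻¹⟩ k g) +
      ((segCount ⟨true, a⟩ k g⁻¹ : ℤ) - segCount ⟨true, a⁻¹⟩ k g⁻¹) = 0 := by
  have h1 : segCount ⟨true, a⟩ k g = segCount ⟨true, a⁻¹⟩ k g⁻¹ :=
    segCount_inv ⟨true, a⟩ k g
  have h2 : segCount ⟨true, a⟩ k g⁻¹ = segCount ⟨true, a⁻¹⟩ k g := by
    have := segCount_inv ⟨true, a⟩ k g⁻¹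
    rwa [inv_inv] at this
  refine ⟨h1, ?_⟩
  rw [h1, h2]
  ring
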